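/- For positive integers n and d, the map Φ : ℝ^{n×d} × ℝᵈ → ℝᵈ defined by Φ(A, z) := the orthogonal projection of z onto the range of Aᵀ (equivalently, onto the row space of A, the linear span in ℝᵈ of the n rows of A) is Borel measurable. Consequently, if (σₜ, zₜ)_{t ∈ [0,T]} is a progressively measurable process with values in ℝ^{n×d} × ℝᵈ with respect to a filtration (𝓕ₜ), then the projected process (Φ(σₜ, zₜ))_{t ∈ [0,T]} is progressively measurable. -/

import Mathlib

open MeasureTheory
open InnerProductSpace

instance (priority := high) finWellFoundedLT (n : ℕ) : WellFoundedLT (Fin n) :=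
  inferInstance

section Aux

variable {d : ℕ}

local notation "E" d => EuclideanSpace ℝ (Fin d)

/-- Gram–Schmidt is a measurable function of the input family. -/
lemma measurable_gramSchmidt_aux (n d : ℕ) :
    ∀ (k : ℕ) (i : Fin n), i.val < k →
      Measurable (fun A : Fin n → EuclideanSpace ℝ (Fin d) => gramSchmidt ℝ A i) := by
  intro k
  induction k with
  | zero => intro i hi; omega
  | succ k ih =>
      intro i hi
      have hrep : ∀ A : Fin n → EuclideanSpace ℝ (Fin d),
          gramSchmidt ℝ A i = A i - ∑ j ∈ Finset.Iio i,
            ((inner ℝ (gramSchmidt ℝ A j) (A i) : ℝ) / (‖gramSchmidt ℝ A j‖ : ℝ) ^ 2) •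
              gramSchmidt ℝ A j := by
        intro A
        exact eq_sub_of_add_eq (gramSchmidt_def'' ℝ A i).symm
      simp_rw [hrep]
      refine (measurable_pi_apply i).sub ?_
      refine Finset.measurable_sum _ (fun j hj => ?_)
      have hj' : (j : ℕ) < k := by
        have := Finset.mem_Iio.1 hj
        have : (j : ℕ) < (i : ℕ) := this
        omega
      have hg : Measurable (fun A : Fin n → EuclideanSpace ℝ (Fin d) => gramSchmidt ℝ A j) :=
        ih j hj'
      exact (Measurable.div (hg.inner (measurable_pi_apply i))
        ((hg.norm).pow_const 2)).smul hg

lemma measurable_gramSchmidt (n d : ℕ) (i : Fin n) :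
    Measurable (fun A : Fin n → EuclideanSpace ℝ (Fin d) => gramSchmidt ℝ A i) :=
  measurable_gramSchmidt_aux n d n i i.isLt

/-- Explicit formula for the projection onto the span of the rows via Gram–Schmidt. -/
lemma proj_formula (n d : ℕ) (A : Fin n → EuclideanSpace ℝ (Fin d))
    (z : EuclideanSpace ℝ (Fin d)) :
    (Submodule.orthogonalProjectionOnto (Submodule.span ℝ (Set.range A)) z : EuclideanSpace ℝ (Fin d)) =
      ∑ i : Fin n, ((inner ℝ (gramSchmidt ℝ A i) z : ℝ) / (‖gramSchmidt ℝ A i‖ : ℝ) ^ 2) •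
        gramSchmidt ℝ A i := by
  set g : Fin n → EuclideanSpace ℝ (Fin d) := gramSchmidt ℝ A with hg
  set v : EuclideanSpace ℝ (Fin d) :=
    ∑ i : Fin n, ((inner ℝ (g i) z : ℝ) / (‖g i‖ : ℝ) ^ 2) • g i with hv
  have hspan : Submodule.span ℝ (Set.range g) = Submodule.span ℝ (Set.range A) :=
    span_gramSchmidt ℝ A
  rw [← hspan]
  refine Submodule.eq_starProjection_of_mem_of_inner_eq_zero ?_ ?_
  · exact Submodule.sum_mem _ fun i _ =>
      Submodule.smul_mem _ _ (Submodule.subset_span (Set.mem_range_self i))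
  · -- orthogonality to each generator suffices
    have key : ∀ j : Fin n, (inner ℝ (g j) (z - v) : ℝ) = 0 := by
      intro j
      have hsum : (inner ℝ (g j) v : ℝ) = inner ℝ (g j) z := by
        rw [hv, inner_sum]
        rw [Finset.sum_eq_single j]
        · rw [real_inner_smul_right]
          by_cases h0 : g j = 0
          · simp [h0]
          · have hns : (‖g j‖ : ℝ) ^ 2 ≠ 0 :=
              pow_ne_zero 2 (norm_ne_zero_iff.2 h0)
            rw [real_inner_self_eq_norm_sq]
            field_simp
        · intro i _ hij
          rw [real_inner_smul_right, gramSchmidt_orthogonal ℝ A (Ne.symm hij)]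
          ring
        · intro h; exact absurd (Finset.mem_univ j) h
      rw [inner_sub_right, hsum, sub_self]
    intro w hw
    induction hw using Submodule.span_induction with
    | mem x hx =>
        obtain ⟨j, rfl⟩ := hx
        rw [real_inner_comm]
        exact key j
    | zero => exact inner_zero_right _
    | add x y _ _ hx hy => rw [inner_add_right, hx, hy, add_zero]
    | smul c x _ hx => rw [real_inner_smul_right, hx, mul_zero]

end Aux

/-- Borel measurability of the map sending a matrix (given by its rows)
and a vector to the orthogonal projection of the vector onto the row space, and the
resulting preservation of progressive measurability. Here a matrix `A ∈ ℝ^{n×d}` is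
encoded by its rows `A : Fin n → EuclideanSpace ℝ (Fin d)`, and the row space is the
span of the rows, i.e. the range of `Aᵀ`. -/
theorem stmt_12 (n d : ℕ)
    (Φ : (Fin n → EuclideanSpace ℝ (Fin d)) → EuclideanSpace ℝ (Fin d) →
      EuclideanSpace ℝ (Fin d))
    (hΦ : ∀ A z, Φ A z =
      ↑(Submodule.orthogonalProjectionOnto (Submodule.span ℝ (Set.range A)) z)) :
    Measurable (fun p : (Fin n → EuclideanSpace ℝ (Fin d)) × EuclideanSpace ℝ (Fin d) =>
      Φ p.1 p.2) ∧
    ∀ {Ω : Type} {m : MeasurableSpace Ω} (T : ℝ)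
      (𝓕 : Filtration (Set.Icc (0 : ℝ) T) m)
      (σ : Set.Icc (0 : ℝ) T → Ω → (Fin n → EuclideanSpace ℝ (Fin d)))
      (z : Set.Icc (0 : ℝ) T → Ω → EuclideanSpace ℝ (Fin d)),
      ProgMeasurable 𝓕 (fun t ω => (σ t ω, z t ω)) →
      ProgMeasurable 𝓕 (fun t ω => Φ (σ t ω) (z t ω)) := by
  have hmeas : Measurable (fun p : (Fin n → EuclideanSpace ℝ (Fin d)) ×
      EuclideanSpace ℝ (Fin d) => Φ p.1 p.2) := by
    have hrw : (fun p : (Fin n → EuclideanSpace ℝ (Fin d)) × EuclideanSpace ℝ (Fin d) =>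
        Φ p.1 p.2) = fun p =>
          ∑ i : Fin n, ((inner ℝ (gramSchmidt ℝ p.1 i) p.2 : ℝ) /
            (‖gramSchmidt ℝ p.1 i‖ : ℝ) ^ 2) • gramSchmidt ℝ p.1 i := by
      funext p
      rw [hΦ, proj_formula]
    rw [hrw]
    refine Finset.measurable_sum _ (fun i _ => ?_)
    have hg : Measurable (fun p : (Fin n → EuclideanSpace ℝ (Fin d)) ×
        EuclideanSpace ℝ (Fin d) => gramSchmidt ℝ p.1 i) :=
      (measurable_gramSchmidt n d i).comp measurable_fst
    exact (Measurable.div (hg.inner measurable_snd) ((hg.norm).pow_const 2)).smul hg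
  refine ⟨hmeas, ?_⟩
  intro Ω m T 𝓕 σ z h t
  exact (hmeas.comp (h t).measurable).stronglyMeasurable
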